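/- Let β > 0, σ² > 0, snr = 1/σ², and let ρ* be the unique positive solution of 1/(1 + ρ) = (1/ρ − σ²)/β. Then ∫_0^{snr} min(1/(1 + ρ), (1/ρ − σ²)/β) dρ = log(1 + ρ*) + (1/β)·(ρ*/snr − log(ρ*/snr) − 1). -/

import Mathlib

open MeasureTheory Real

/-- Area formula for Gaussian signaling (Proposition 1 instantiated): if `ρ*` is the
unique positive solution of `1/(1+ρ) = (1/ρ − σ²)/β`, then the area of
`min(1/(1+ρ), (1/ρ − σ²)/β)` on `(0, snr)` equals
`log(1+ρ*) + (1/β)·(ρ*/snr − log(ρ*/snr) − 1)`. -/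
theorem stmt_16 (β σ2 snr : ℝ) (hβ : 0 < β) (hσ : 0 < σ2) (hsnr : snr = 1 / σ2)
    (ρs : ℝ) (hρs : 0 < ρs) (hfix : 1 / (1 + ρs) = (1 / ρs - σ2) / β)
    (huniq : ∀ ρ : ℝ, 0 < ρ → 1 / (1 + ρ) = (1 / ρ - σ2) / β → ρ = ρs) :
    ∫ ρ in (0:ℝ)..snr, min (1 / (1 + ρ)) ((1 / ρ - σ2) / β) =
      Real.log (1 + ρs) + (1 / β) * (ρs / snr - Real.log (ρs / snr) - 1) := by
  have hsnrpos : 0 < snr := hsnr ▸ by positivity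
  have hσsnr : σ2 * snr = 1 := by rw [hsnr]; field_simp
  set g : ℝ → ℝ := fun x => (1 / x - σ2) / β - 1 / (1 + x) with hg
  have hgcont : ∀ a b : ℝ, 0 < a → ContinuousOn g (Set.Icc a b) := by
    intro a b ha
    apply ContinuousOn.sub
    · apply ContinuousOn.div _ continuousOn_const (fun _ _ => hβ.ne')
      exact ContinuousOn.sub
        (continuousOn_const.div continuousOn_id (fun x hx => by
          have := hx.1; intro h; simp [h] at this; linarith)) continuousOn_const
    · exact continuousOn_const.div (continuousOn_const.add continuousOn_id)
        (fun x hx => by have := hx.1; intro h; nlinarith)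
  -- ρs < snr
  have hρslt : ρs < snr := by
    have h1 : 0 < 1 / (1 + ρs) := by positivity
    have h2 : 0 < 1 / ρs - σ2 := by
      by_contra h
      push_neg at h
      have : (1 / ρs - σ2) / β ≤ 0 := div_nonpos_of_nonpos_of_nonneg h hβ.le
      linarith [hfix ▸ h1]
    have h3 : σ2 < 1 / ρs := by linarith
    have h4 : σ2 * ρs < 1 := (lt_div_iff₀ hρs).mp h3
    rw [hsnr, lt_div_iff₀ hσ]
    nlinarith [h4]
  -- no zero of g except ρs
  have hzero : ∀ c : ℝ, 0 < c → g c = 0 → c = ρs := by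
    intro c hc hgc
    simp only [hg] at hgc
    exact huniq c hc (by linarith)
  -- min equals first branch on Ioc 0 ρs
  have hmin1 : Set.EqOn (fun ρ => min (1 / (1 + ρ)) ((1 / ρ - σ2) / β))
      (fun ρ => 1 / (1 + ρ)) (Set.Ioc 0 ρs) := by
    intro ρ hρ
    have hρ0 : 0 < ρ := hρ.1
    have hgnn : 0 ≤ g ρ := by
      by_contra h
      push_neg at h
      -- pick small a with g a > 0
      set a := min ρ (1 / (σ2 + β)) / 2 with ha
      have ha0 : 0 < a := by positivity
      have haρ : a ≤ ρ := le_trans (by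
        have := min_le_left ρ (1 / (σ2 + β)); linarith) (le_refl ρ)
      have hasb : a ≤ 1 / (σ2 + β) / 2 := by
        have := min_le_right ρ (1 / (σ2 + β)); linarith
      have hinva : σ2 + 2 * β ≤ 1 / a := by
        have h1 : 0 < σ2 + β := by linarith
        have heq : (1:ℝ) / (2 * (σ2 + β)) = 1 / (σ2 + β) / 2 := by rw [div_div, mul_comm]
        have h2 : a ≤ 1 / (2 * (σ2 + β)) := by rw [heq]; linarith
        calc σ2 + 2 * β ≤ 2 * (σ2 + β) := by linarith
          _ = 1 / (1 / (2 * (σ2 + β))) := by field_simp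
          _ ≤ 1 / a := one_div_le_one_div_of_le ha0 h2
      have hga : 0 < g a := by
        have h1 : 1 / (1 + a) ≤ 1 := by
          rw [div_le_one (by linarith)]; linarith
        have h2 : 1 < (1 / a - σ2) / β := by
          rw [lt_div_iff₀ hβ]; linarith
        simp only [hg]; linarith
      obtain ⟨c, hcmem, hc0⟩ := intermediate_value_Icc' haρ (hgcont a ρ ha0)
        (Set.mem_Icc.mpr ⟨h.le, hga.le⟩)
      have hcρs : c = ρs := hzero c (lt_of_lt_of_le ha0 hcmem.1) hc0
      have hcle : c ≤ ρ := hcmem.2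
      have hρeq : ρ = ρs := le_antisymm hρ.2 (hcρs ▸ hcle)
      have hgρs : g ρs = 0 := by simp only [hg]; linarith
      rw [hρeq] at h
      linarith
    simp only [hg] at hgnn
    exact min_eq_left (by linarith)
  -- min equals second branch on Ioc ρs snr
  have hmin2 : Set.EqOn (fun ρ => min (1 / (1 + ρ)) ((1 / ρ - σ2) / β))
      (fun ρ => (1 / ρ - σ2) / β) (Set.Ioc ρs snr) := by
    intro ρ hρ
    have hρ0 : 0 < ρ := lt_trans hρs hρ.1
    have hgsnr : g snr < 0 := by
      have : 1 / snr = σ2 := by rw [hsnr]; field_simp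
      simp only [hg, this, sub_self, zero_div, zero_sub, neg_lt, neg_zero]
      positivity
    have hgnp : g ρ ≤ 0 := by
      by_contra h
      push_neg at h
      obtain ⟨c, hcmem, hc0⟩ := intermediate_value_Icc' hρ.2 (hgcont ρ snr hρ0)
        (Set.mem_Icc.mpr ⟨hgsnr.le, h.le⟩)
      have hcρs : c = ρs := hzero c (lt_of_lt_of_le hρ0 hcmem.1) hc0
      linarith [hρ.1, hcmem.1, hcρs ▸ hcmem.1]
    simp only [hg] at hgnp
    exact min_eq_right (by linarith)
  -- integrability
  have hI1 : IntervalIntegrable (fun ρ => min (1 / (1 + ρ)) ((1 / ρ - σ2) / β))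
      volume 0 ρs := by
    rw [intervalIntegrable_iff, Set.uIoc_of_le hρs.le]
    have : IntegrableOn (fun ρ => 1 / (1 + ρ)) (Set.Ioc 0 ρs) volume := by
      have := (ContinuousOn.intervalIntegrable (μ := volume) (u := fun ρ : ℝ => 1 / (1 + ρ))
        (a := 0) (b := ρs) (by
          apply continuousOn_const.div (continuousOn_const.add continuousOn_id)
          intro x hx
          rw [Set.uIcc_of_le hρs.le] at hx
          have := hx.1; intro h; simp only [Pi.add_apply, id_eq] at h; nlinarith))
      rwa [intervalIntegrable_iff, Set.uIoc_of_le hρs.le] at this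
    exact this.congr_fun (fun x hx => (hmin1 hx).symm) measurableSet_Ioc
  have hI2 : IntervalIntegrable (fun ρ => min (1 / (1 + ρ)) ((1 / ρ - σ2) / β))
      volume ρs snr := by
    rw [intervalIntegrable_iff, Set.uIoc_of_le hρslt.le]
    have : IntegrableOn (fun ρ => (1 / ρ - σ2) / β) (Set.Ioc ρs snr) volume := by
      have := (ContinuousOn.intervalIntegrable (μ := volume) (u := fun ρ : ℝ => (1 / ρ - σ2) / β)
        (a := ρs) (b := snr) (by
          apply ContinuousOn.div _ continuousOn_const (fun _ _ => hβ.ne')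
          apply ContinuousOn.sub _ continuousOn_const
          apply continuousOn_const.div continuousOn_id
          intro x hx
          rw [Set.uIcc_of_le hρslt.le] at hx
          have := hx.1; intro h; simp only [id_eq] at h; rw [h] at this; linarith))
      rwa [intervalIntegrable_iff, Set.uIoc_of_le hρslt.le] at this
    exact this.congr_fun (fun x hx => (hmin2 hx).symm) measurableSet_Ioc
  rw [← intervalIntegral.integral_add_adjacent_intervals hI1 hI2]
  have heq1 : ∫ ρ in (0:ℝ)..ρs, min (1 / (1 + ρ)) ((1 / ρ - σ2) / β)
      = ∫ ρ in (0:ℝ)..ρs, 1 / (1 + ρ) := by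
    rw [intervalIntegral.integral_of_le hρs.le, intervalIntegral.integral_of_le hρs.le]
    exact setIntegral_congr_fun measurableSet_Ioc hmin1
  have heq2 : ∫ ρ in ρs..snr, min (1 / (1 + ρ)) ((1 / ρ - σ2) / β)
      = ∫ ρ in ρs..snr, (1 / ρ - σ2) / β := by
    rw [intervalIntegral.integral_of_le hρslt.le, intervalIntegral.integral_of_le hρslt.le]
    exact setIntegral_congr_fun measurableSet_Ioc hmin2
  rw [heq1, heq2]
  -- first integral
  have hint1 : ∫ ρ in (0:ℝ)..ρs, 1 / (1 + ρ) = Real.log (1 + ρs) := by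
    have : ∫ ρ in (0:ℝ)..ρs, 1 / (1 + ρ) = ∫ ρ in (0:ℝ)..ρs, (fun u => 1 / u) (ρ + 1) := by
      congr 1; ext ρ; ring_nf
    rw [this, intervalIntegral.integral_comp_add_right (fun u => 1 / u) 1,
      integral_one_div (by
        intro h
        rw [Set.uIcc_of_le (by linarith : (0:ℝ)+1 ≤ ρs+1)] at h
        have := h.1; linarith)]
    rw [zero_add]
    congr 1
    field_simp
    ring
  -- second integral
  have hIinv : IntervalIntegrable (fun ρ : ℝ => 1 / β * (1 / ρ)) volume ρs snr := by
    apply ContinuousOn.intervalIntegrable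
    apply continuousOn_const.mul
    apply continuousOn_const.div continuousOn_id
    intro x hx
    rw [Set.uIcc_of_le hρslt.le] at hx
    have := hx.1; intro h; simp only [id_eq] at h; rw [h] at this; linarith
  have hint2 : ∫ ρ in ρs..snr, (1 / ρ - σ2) / β
      = 1 / β * Real.log (snr / ρs) - σ2 / β * (snr - ρs) := by
    have hrw : (fun ρ : ℝ => (1 / ρ - σ2) / β)
        = fun ρ : ℝ => 1 / β * (1 / ρ) - σ2 / β := by
      ext ρ; rw [sub_div]; ring
    rw [hrw, intervalIntegral.integral_sub hIinv (intervalIntegrable_const),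
      intervalIntegral.integral_const_mul, integral_one_div (by
        intro h
        rw [Set.uIcc_of_le hρslt.le] at h
        have := h.1; linarith), intervalIntegral.integral_const]
    simp only [smul_eq_mul]
    ring
  rw [hint1, hint2]
  have hlog : Real.log (snr / ρs) = - Real.log (ρs / snr) := by
    rw [Real.log_div hsnrpos.ne' hρs.ne', Real.log_div hρs.ne' hsnrpos.ne']
    ring
  have hσ2snr : σ2 = 1 / snr := by rw [hsnr]; field_simp
  rw [hlog, hσ2snr]
  field_simp
  ring
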